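/- Let |ψ_j⟩ and |ψ_{j+1}⟩ = A|ψ_j⟩ be nonzero vectors, where A = 𝟙 ⊗ T⁻¹ acts on a tensor factor disjoint from the support of an observable O with ‖O‖ ≤ 1, and suppose the clustering estimate |⟨ψ_j|O ⊗ A†A|ψ_j⟩/⟨ψ_j|ψ_j⟩ − (⟨ψ_j|O|ψ_j⟩/⟨ψ_j|ψ_j⟩)·(⟨ψ_{j+1}|ψ_{j+1}⟩/⟨ψ_j|ψ_j⟩)| ≤ δ⁻² e^{−μℓ} holds, and that ⟨ψ_{j+1}|ψ_{j+1}⟩/⟨ψ_j|ψ_j⟩ ≥ δ². Then |⟨ψ_{j+1}|O|ψ_{j+1}⟩/⟨ψ_{j+1}|ψ_{j+1}⟩ − ⟨ψ_j|O|ψ_j⟩/⟨ψ_j|ψ_j⟩| ≤ δ⁻⁴ e^{−μℓ}. -/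

import Mathlib

open scoped InnerProductSpace

/-- The single-step clustering estimate. With `ψ_{j+1} = A ψ_j` for
`A = 𝟙 ⊗ T⁻¹` (an operator commuting with the observable `O`, `‖O‖ ≤ 1`, `O` Hermitian),
the clustering bound on `⟨ψ_j|O A†A|ψ_j⟩` and the norm-ratio bound
`⟨ψ_{j+1}|ψ_{j+1}⟩/⟨ψ_j|ψ_j⟩ ≥ δ²` imply that the normalized expectation values of `O`
on `ψ_j` and `ψ_{j+1}` differ by at most `δ⁻⁴ e^{-μℓ}`. -/
theorem stmt7 {H : Type*} [NormedAddCommGroup H] [InnerProductSpace ℂ H]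
    [FiniteDimensional ℂ H]
    (O A : H →ₗ[ℂ] H) (ψj : H) (δ μ ℓ : ℝ)
    (hδ : δ ∈ Set.Ioc (0 : ℝ) 1) (hμ : 0 < μ) (hℓ : 0 < ℓ)
    (hψj : ψj ≠ 0) (hψj1 : A ψj ≠ 0)
    (hO : LinearMap.IsSymmetric O) (hOnorm : ∀ v : H, ‖O v‖ ≤ ‖v‖)
    (hcomm : ∀ v : H, O (A v) = A (O v))
    (hratio : δ ^ 2 * ‖ψj‖ ^ 2 ≤ ‖A ψj‖ ^ 2)
    (hcluster :
      ‖((⟪ψj, O ((LinearMap.adjoint A) (A ψj))⟫_ℂ / (‖ψj‖ ^ 2 : ℂ)) -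
        (⟪ψj, O ψj⟫_ℂ / (‖ψj‖ ^ 2 : ℂ)) * ((‖A ψj‖ ^ 2 : ℂ) / (‖ψj‖ ^ 2 : ℂ)))‖ ≤
      δ⁻¹ ^ 2 * Real.exp (-μ * ℓ)) :
    ‖((⟪A ψj, O (A ψj)⟫_ℂ / (‖A ψj‖ ^ 2 : ℂ)) -
        (⟪ψj, O ψj⟫_ℂ / (‖ψj‖ ^ 2 : ℂ)))‖ ≤
      δ⁻¹ ^ 4 * Real.exp (-μ * ℓ) := by
  have hδ0 : 0 < δ := hδ.1
  have hn : (0:ℝ) < ‖ψj‖ ^ 2 := by have := norm_pos_iff.mpr hψj; positivity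
  have hm : (0:ℝ) < ‖A ψj‖ ^ 2 := by have := norm_pos_iff.mpr hψj1; positivity
  -- adjoint of A commutes with O
  have hAdO : ∀ v : H, (LinearMap.adjoint A) (O v) = O ((LinearMap.adjoint A) v) := by
    intro v
    apply ext_inner_left ℂ
    intro x
    rw [LinearMap.adjoint_inner_right, ← hO, hcomm, ← LinearMap.adjoint_inner_right, hO]
  have key : ⟪A ψj, O (A ψj)⟫_ℂ = ⟪ψj, O ((LinearMap.adjoint A) (A ψj))⟫_ℂ := by
    rw [← hAdO, LinearMap.adjoint_inner_right]
  set X := ⟪ψj, O ((LinearMap.adjoint A) (A ψj))⟫_ℂ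
  set Y := ⟪ψj, O ψj⟫_ℂ
  set N : ℂ := (‖ψj‖ ^ 2 : ℂ)
  set M : ℂ := (‖A ψj‖ ^ 2 : ℂ)
  have hN : N ≠ 0 := by
    simp only [N]
    exact_mod_cast ne_of_gt hn
  have hM : M ≠ 0 := by
    simp only [M]
    exact_mod_cast ne_of_gt hm
  rw [key]
  have hsplit : X / M - Y / N = (X / N - (Y / N) * (M / N)) * (N / M) := by
    field_simp
  rw [hsplit, norm_mul]
  have hNM : ‖N / M‖ = ‖ψj‖ ^ 2 / ‖A ψj‖ ^ 2 := by
    have : (N / M : ℂ) = ((‖ψj‖ ^ 2 / ‖A ψj‖ ^ 2 : ℝ) : ℂ) := by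
      simp [N, M]
    rw [this, Complex.norm_real, Real.norm_of_nonneg (by positivity)]
  rw [hNM]
  have hnm : ‖ψj‖ ^ 2 / ‖A ψj‖ ^ 2 ≤ δ⁻¹ ^ 2 := by
    rw [div_le_iff₀ hm, inv_pow, inv_mul_eq_div, le_div_iff₀ (by positivity)]
    linarith [hratio]
  calc ‖X / N - Y / N * (M / N)‖ * (‖ψj‖ ^ 2 / ‖A ψj‖ ^ 2)
      ≤ (δ⁻¹ ^ 2 * Real.exp (-μ * ℓ)) * δ⁻¹ ^ 2 := by
        apply mul_le_mul hcluster hnm (by positivity) (by positivity)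
    _ = δ⁻¹ ^ 4 * Real.exp (-μ * ℓ) := by ring
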